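/- Let (S, ≤) be a semilinear order in which any two elements have a common upper bound, and let f : S → S injective preserve B and ¬B. Let T := {x | ∃ y, x < y ∧ f(y) < f(x)} and assume T is upward closed and f reverses < on T. Then T contains no two incomparable elements, i.e., T is a chain. -/
import Mathlib


variable {S : Type*} [PartialOrder S]

/-- Incomparability in a partial order. -/
def Incomp (x y : S) : Prop := ¬ x ≤ y ∧ ¬ y ≤ x

/-- Betweenness relation of a semilinear order. -/
def TreeBtw (a b c : S) : Prop :=
  b ≠ a ∧ b ≠ c ∧
    ((a < b ∧ b ≤ c) ∨ (c < b ∧ b ≤ a) ∨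
      (Incomp a c ∧ a < b ∧ c < b ∧ ∀ d, a < d → c < d → b ≤ d))

lemma not_btw_of_incomp {x y z : S} (hxy : Incomp x y) (hxz : x < z) (hyz : y < z) :
    ¬ TreeBtw x y z := by
  rintro ⟨-, -, h | h | h⟩
  · exact hxy.1 h.1.le
  · exact absurd (h.1.trans hyz) (lt_irrefl z)
  · exact h.1.1 hxz.le

theorem reversing_set_is_chain
    (hchain : ∀ x y z : S, x ≤ y → x ≤ z → y ≤ z ∨ z ≤ y)
    (hub : ∀ x y : S, ∃ z, x ≤ z ∧ y ≤ z)
    (f : S → S) (hinj : Function.Injective f)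
    (hB : ∀ x y z : S, TreeBtw x y z → TreeBtw (f x) (f y) (f z))
    (hnB : ∀ x y z : S, x ≠ y → y ≠ z → z ≠ x → ¬ TreeBtw x y z →
      ¬ TreeBtw (f x) (f y) (f z))
    (hTup : ∀ x y : S, x ∈ {x : S | ∃ y, x < y ∧ f y < f x} → x < y →
      y ∈ {x : S | ∃ y, x < y ∧ f y < f x})
    (hTrev : ∀ x y : S, x ∈ {x : S | ∃ y, x < y ∧ f y < f x} →
      y ∈ {x : S | ∃ y, x < y ∧ f y < f x} → x < y → f y < f x) :
    ∀ x y : S, x ∈ {x : S | ∃ y, x < y ∧ f y < f x} →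
      y ∈ {x : S | ∃ y, x < y ∧ f y < f x} → ¬ Incomp x y := by
  intro x y hx hy hI
  obtain ⟨z, hxz, hyz⟩ := hub x y
  have hxney : x ≠ y := fun h => hI.1 (h ▸ le_refl x)
  have hxz' : x < z := lt_of_le_of_ne hxz (fun h => hI.2 (h ▸ hyz))
  have hyz' : y < z := lt_of_le_of_ne hyz (fun h => hI.1 (h ▸ hxz))
  have hzT : z ∈ {x : S | ∃ y, x < y ∧ f y < f x} := hTup x z hx hxz'
  have hfx : f z < f x := hTrev x z hx hzT hxz'
  have hfy : f z < f y := hTrev y z hy hzT hyz'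
  have hfne : f x ≠ f y := fun h => hxney (hinj h)
  rcases hchain (f z) (f x) (f y) hfx.le hfy.le with h | h
  · -- f x ≤ f y : then TreeBtw (f y) (f x) (f z)
    exact hnB y x z (Ne.symm hxney) (ne_of_lt hxz') (ne_of_gt hyz')
      (not_btw_of_incomp ⟨hI.2, hI.1⟩ hyz' hxz')
      ⟨hfne, ne_of_gt hfx, Or.inr (Or.inl ⟨hfx, h⟩)⟩
  · -- f y ≤ f x : then TreeBtw (f x) (f y) (f z)
    exact hnB x y z hxney (ne_of_lt hyz') (ne_of_gt hxz')
      (not_btw_of_incomp hI hxz' hyz')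
      ⟨hfne.symm, ne_of_gt hfy, Or.inr (Or.inl ⟨hfy, h⟩)⟩
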